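/- For each k ∈ ℤ \ {0}, the singular Sturm–Liouville problem (ρ W')' − (k²/ρ) W = −λ·(kR₁/(R₂²−R₁²))·(ρ − R₂²/ρ)·W on (R₁,R₂) with W(R₁) = W(R₂) = 0 admits no purely imaginary eigenvalue λ (and λ = 0 is not an eigenvalue). -/

import Mathlib

open Real Set Complex

theorem sturm_liouville_no_imaginary_eigenvalue
    (R₁ R₂ : ℝ) (hR₁ : 0 < R₁) (hR : R₁ < R₂)
    (k : ℤ) (hk : k ≠ 0) (lam : ℂ) (hlam : lam.re = 0)
    (W : ℝ → ℂ) (hW : ContDiffOn ℝ 2 W (Icc R₁ R₂))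
    (hode : ∀ ρ ∈ Ioo R₁ R₂,
      deriv (fun r : ℝ => (r : ℂ) * deriv W r) ρ - ((k : ℂ) ^ 2 / ρ) * W ρ =
        -lam * ((k : ℂ) * R₁ / ((R₂ : ℂ) ^ 2 - (R₁ : ℂ) ^ 2)) *
          ((ρ : ℂ) - (R₂ : ℂ) ^ 2 / (ρ : ℂ)) * W ρ)
    (hb₁ : W R₁ = 0) (hb₂ : W R₂ = 0) :
    ∀ ρ ∈ Icc R₁ R₂, W ρ = 0 := by
  set g : ℝ → ℝ := fun ρ =>
    ((starRingEnd ℂ) (W ρ) * ((ρ : ℂ) * derivWithin W (Icc R₁ R₂) ρ)).re with hg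
  -- preliminary: C² on the open interval
  have hIoo : ContDiffOn ℝ 2 W (Ioo R₁ R₂) := hW.mono Ioo_subset_Icc_self
  have h21 : (2 : WithTop ℕ∞) = 1 + 1 := by norm_num
  have hsplit := (contDiffOn_succ_iff_deriv_of_isOpen (f := W) (n := 1) isOpen_Ioo).1
    (h21 ▸ hIoo)
  have hdiffW : DifferentiableOn ℝ W (Ioo R₁ R₂) := hsplit.1
  have hdiffW' : DifferentiableOn ℝ (deriv W) (Ioo R₁ R₂) := hsplit.2.2.differentiableOn one_ne_zero
  -- key derivative computation
  have key : ∀ ρ ∈ Ioo R₁ R₂, HasDerivAt g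
      (ρ * Complex.normSq (deriv W ρ) + ((k : ℝ) ^ 2 / ρ) * Complex.normSq (W ρ)) ρ := by
    intro ρ hρ
    have hρ0 : (0:ℝ) < ρ := lt_trans hR₁ hρ.1
    have hW1 : HasDerivAt W (deriv W ρ) ρ :=
      ((hdiffW ρ hρ).differentiableAt (isOpen_Ioo.mem_nhds hρ)).hasDerivAt
    have hd' : DifferentiableAt ℝ (deriv W) ρ :=
      (hdiffW' ρ hρ).differentiableAt (isOpen_Ioo.mem_nhds hρ)
    have hF : DifferentiableAt ℝ (fun r : ℝ => (r : ℂ) * deriv W r) ρ :=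
      (Complex.ofRealCLM.differentiable.differentiableAt).mul hd'
    set D : ℂ := deriv (fun r : ℝ => (r : ℂ) * deriv W r) ρ with hD
    have hFd : HasDerivAt (fun r : ℝ => (r : ℂ) * deriv W r) D ρ := hF.hasDerivAt
    have hconj : HasDerivAt (fun r => (starRingEnd ℂ) (W r)) ((starRingEnd ℂ) (deriv W ρ)) ρ :=
      hW1.star
    have hmul : HasDerivAt (fun r => (starRingEnd ℂ) (W r) * ((r : ℂ) * deriv W r))
        ((starRingEnd ℂ) (deriv W ρ) * ((ρ : ℂ) * deriv W ρ)
          + (starRingEnd ℂ) (W ρ) * D) ρ := hconj.mul hFd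
    have hre := Complex.reCLM.hasFDerivAt.comp_hasDerivAt ρ hmul
    have heq : g =ᶠ[nhds ρ] fun r => ((starRingEnd ℂ) (W r) * ((r : ℂ) * deriv W r)).re := by
      filter_upwards [isOpen_Ioo.mem_nhds hρ] with r hr
      rw [hg]
      simp only
      rw [derivWithin_of_mem_nhds (Icc_mem_nhds hr.1 hr.2)]
    have hgd : HasDerivAt g
        (((starRingEnd ℂ) (deriv W ρ) * ((ρ : ℂ) * deriv W ρ)
          + (starRingEnd ℂ) (W ρ) * D).re) ρ := by
      exact HasDerivAt.congr_of_eventuallyEq hre heq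
    convert hgd using 1
    -- compute the real part using the ODE
    have hDval : D = ((k : ℂ) ^ 2 / ρ) * W ρ
        + -lam * ((k : ℂ) * R₁ / ((R₂ : ℂ) ^ 2 - (R₁ : ℂ) ^ 2)) *
          ((ρ : ℂ) - (R₂ : ℂ) ^ 2 / (ρ : ℂ)) * W ρ := by
      have h := hode ρ hρ
      rw [← hD] at h
      linear_combination h
    rw [hDval]
    have hc1 : ((k : ℂ) ^ 2 / ρ) = (((k:ℝ)^2 / ρ : ℝ) : ℂ) := by push_cast; ring
    have hc2 : ((k : ℂ) * R₁ / ((R₂ : ℂ) ^ 2 - (R₁ : ℂ) ^ 2)) *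
          ((ρ : ℂ) - (R₂ : ℂ) ^ 2 / (ρ : ℂ))
        = (((k:ℝ) * R₁ / (R₂ ^ 2 - R₁ ^ 2) * (ρ - R₂ ^ 2 / ρ) : ℝ) : ℂ) := by
      push_cast; ring
    rw [show -lam * ((k : ℂ) * R₁ / ((R₂ : ℂ) ^ 2 - (R₁ : ℂ) ^ 2)) *
          ((ρ : ℂ) - (R₂ : ℂ) ^ 2 / (ρ : ℂ)) * W ρ
        = -lam * ((((k:ℝ) * R₁ / (R₂ ^ 2 - R₁ ^ 2) * (ρ - R₂ ^ 2 / ρ) : ℝ)) : ℂ) * W ρ by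
      rw [← hc2]; ring, hc1]
    simp only [Complex.add_re, Complex.mul_re, Complex.mul_im, Complex.conj_re, Complex.conj_im,
      Complex.ofReal_re, Complex.ofReal_im, Complex.neg_re, Complex.neg_im, Complex.normSq_apply,
      Complex.add_im, Complex.sub_re, Complex.sub_im,
      hlam]
    ring
  -- continuity of g on the closed interval
  have hgcont : ContinuousOn g (Icc R₁ R₂) := by
    have h1 : ContinuousOn (derivWithin W (Icc R₁ R₂)) (Icc R₁ R₂) :=
      hW.continuousOn_derivWithin (uniqueDiffOn_Icc hR) (by norm_num)
    exact Complex.continuous_re.comp_continuousOn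
      (((Complex.continuous_conj.comp_continuousOn hW.continuousOn)).mul
        ((Complex.continuous_ofReal.continuousOn).mul h1))
  -- g is monotone on [R₁, R₂]
  have hmono : MonotoneOn g (Icc R₁ R₂) := by
    apply monotoneOn_of_deriv_nonneg (convex_Icc _ _) hgcont
    · rw [interior_Icc]
      intro x hx
      exact ((key x hx).differentiableAt).differentiableWithinAt
    · rw [interior_Icc]
      intro x hx
      rw [(key x hx).deriv]
      have hx0 : (0:ℝ) < x := lt_trans hR₁ hx.1
      have n1 := Complex.normSq_nonneg (deriv W x)
      have n2 := Complex.normSq_nonneg (W x)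
      have : (0:ℝ) ≤ (k:ℝ)^2 / x := div_nonneg (sq_nonneg _) hx0.le
      nlinarith
  have hgR₁ : g R₁ = 0 := by simp [hg, hb₁]
  have hgR₂ : g R₂ = 0 := by simp [hg, hb₂]
  have hg0 : ∀ x ∈ Icc R₁ R₂, g x = 0 := by
    intro x hx
    have h1 := hmono (left_mem_Icc.2 hR.le) hx hx.1
    have h2 := hmono hx (right_mem_Icc.2 hR.le) hx.2
    rw [hgR₁] at h1; rw [hgR₂] at h2; linarith
  intro ρ hρ
  rcases eq_or_lt_of_le hρ.1 with h1 | h1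
  · rw [← h1]; exact hb₁
  rcases eq_or_lt_of_le hρ.2 with h2 | h2
  · rw [h2]; exact hb₂
  have hρI : ρ ∈ Ioo R₁ R₂ := ⟨h1, h2⟩
  have hz : HasDerivAt g 0 ρ := by
    have : g =ᶠ[nhds ρ] fun _ => 0 := by
      filter_upwards [Icc_mem_nhds h1 h2] with r hr
      exact hg0 r hr
    exact HasDerivAt.congr_of_eventuallyEq (hasDerivAt_const ρ 0) this
  have := (key ρ hρI).unique hz
  have hρ0 : (0:ℝ) < ρ := lt_trans hR₁ hρI.1
  have hk2 : (0:ℝ) < (k:ℝ)^2 / ρ := by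
    have hkne : (k:ℝ) ≠ 0 := Int.cast_ne_zero.2 hk
    exact div_pos (lt_of_le_of_ne (sq_nonneg _) (Ne.symm (pow_ne_zero 2 hkne))) hρ0
  have hns1 : 0 ≤ ρ * Complex.normSq (deriv W ρ) := mul_nonneg hρ0.le (Complex.normSq_nonneg _)
  have hns : Complex.normSq (W ρ) = 0 := by nlinarith [Complex.normSq_nonneg (W ρ)]
  exact Complex.normSq_eq_zero.1 hns
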